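/- Let N ≥ 1, let r ∈ ℝ^N with r ≠ 0, let λ ≤ 0 be a real number, and let Λ be a real N×N positive semidefinite matrix such that for every x ∈ ℝ^N, Λ.mulVec x = 0 if and only if x = t • r for some t ∈ ℝ. Set M := λ • (I − (r rᵀ)/‖r‖²) − Λ, where r rᵀ denotes the outer-product matrix (r rᵀ)_{ij} = rᵢ rⱼ and I is the identity. Then −M is positive semidefinite, and M.mulVec x = 0 if and only if x = t • r for some t ∈ ℝ (so M has rank N − 1). -/

import Mathlib

open Matrix

lemma vecMulVec_mulVec' {N : ℕ} (r x : Fin N → ℝ) :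
    (vecMulVec r r) *ᵥ x = (r ⬝ᵥ x) • r := by
  funext i
  simp [mulVec, dotProduct, vecMulVec_apply, Finset.mul_sum, mul_comm, mul_left_comm]

lemma cs {N : ℕ} (r x : Fin N → ℝ) : (r ⬝ᵥ x)^2 ≤ (r ⬝ᵥ r) * (x ⬝ᵥ x) := by
  simpa [dotProduct, sq] using Finset.sum_mul_sq_le_sq_mul_sq Finset.univ r x

/-- Linearization of the normalized second-order flow at a flat or negative DQE-metric:
if `Λ` is positive semidefinite with kernel exactly the span of `r`, and `λ ≤ 0`, then
`M = λ(I - rrᵀ/‖r‖²) - Λ` satisfies: `-M` is positive semidefinite, and the kernel of `M`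
is exactly the span of `r` (so `M` has rank `N - 1`). -/
theorem stmt_8 {N : ℕ} (hN : 1 ≤ N) (r : Fin N → ℝ) (hr : r ≠ 0)
    (lam : ℝ) (hlam : lam ≤ 0)
    (Λ : Matrix (Fin N) (Fin N) ℝ) (hΛ : Λ.PosSemidef)
    (hker : ∀ x : Fin N → ℝ, Λ.mulVec x = 0 ↔ ∃ t : ℝ, x = t • r)
    (M : Matrix (Fin N) (Fin N) ℝ)
    (hM : M = lam • ((1 : Matrix (Fin N) (Fin N) ℝ) - (r ⬝ᵥ r)⁻¹ • vecMulVec r r) - Λ) :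
    (-M).PosSemidef ∧ (∀ x : Fin N → ℝ, M.mulVec x = 0 ↔ ∃ t : ℝ, x = t • r) ∧
      M.rank = N - 1 := by
  have hc : 0 < r ⬝ᵥ r := by
    rcases lt_or_eq_of_le (Finset.sum_nonneg fun i _ => mul_self_nonneg (r i)) with h | h
    · exact h
    · exact absurd (dotProduct_self_eq_zero.mp h.symm) hr
  -- mulVec formula
  have hmv : ∀ x, M *ᵥ x = lam • (x - ((r ⬝ᵥ r)⁻¹ * (r ⬝ᵥ x)) • r) - Λ *ᵥ x := by
    intro x
    rw [hM]
    rw [sub_mulVec, smul_mulVec, sub_mulVec, one_mulVec, smul_mulVec,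
      vecMulVec_mulVec']
    rw [smul_smul]
  -- quadratic form nonneg part
  have hq : ∀ x, 0 ≤ x ⬝ᵥ x - (r ⬝ᵥ r)⁻¹ * (r ⬝ᵥ x) * (r ⬝ᵥ x) := by
    intro x
    have := cs r x
    have h2 : (r ⬝ᵥ r)⁻¹ * (r ⬝ᵥ x) * (r ⬝ᵥ x) ≤ x ⬝ᵥ x := by
      rw [mul_assoc, ← sq, inv_mul_le_iff₀ hc]
      linarith [cs r x]
    linarith
  have hdot : ∀ x, x ⬝ᵥ ((-M) *ᵥ x)
      = (-lam) * (x ⬝ᵥ x - (r ⬝ᵥ r)⁻¹ * (r ⬝ᵥ x) * (r ⬝ᵥ x)) + x ⬝ᵥ (Λ *ᵥ x) := by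
    intro x
    rw [neg_mulVec, hmv x, dotProduct_neg, dotProduct_sub, dotProduct_smul, dotProduct_sub,
      dotProduct_smul]
    simp [smul_eq_mul, dotProduct_comm x r]
    ring
  have hΛnn : ∀ x : Fin N → ℝ, 0 ≤ x ⬝ᵥ (Λ *ᵥ x) := fun x => by
    simpa using hΛ.dotProduct_mulVec_nonneg x
  have hherm : (-M).IsHermitian := by
    have h1 : (vecMulVec r r).IsHermitian := by
      ext i j
      simp [vecMulVec_apply, mul_comm]
    rw [hM]
    simp only [IsHermitian, conjTranspose_neg, conjTranspose_sub, conjTranspose_smul,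
      conjTranspose_one]
    rw [hΛ.1, h1]
    simp
  have hpsd : (-M).PosSemidef := by
    refine .of_dotProduct_mulVec_nonneg hherm fun x => ?_
    rw [star_trivial, hdot x]
    have := hq x
    have := hΛnn x
    nlinarith
  have hkerM : ∀ x : Fin N → ℝ, M *ᵥ x = 0 ↔ ∃ t : ℝ, x = t • r := by
    intro x
    constructor
    · intro hx
      have h0 : x ⬝ᵥ ((-M) *ᵥ x) = 0 := by rw [neg_mulVec, hx]; simp
      rw [hdot x] at h0
      have hq' := hq x
      have hΛ' := hΛnn x
      have hΛ0 : x ⬝ᵥ (Λ *ᵥ x) = 0 := by nlinarith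
      have : Λ *ᵥ x = 0 := by
        have := (hΛ.dotProduct_mulVec_zero_iff x).mp (by simpa using hΛ0)
        exact this
      exact (hker x).mp this
    · rintro ⟨t, rfl⟩
      have hΛr : Λ *ᵥ r = 0 := (hker r).mpr ⟨1, by simp⟩
      rw [mulVec_smul, hmv r, hΛr]
      rw [inv_mul_cancel₀ hc.ne']
      simp
  refine ⟨hpsd, hkerM, ?_⟩
  -- rank
  have hkerlin : LinearMap.ker M.mulVecLin = Submodule.span ℝ {r} := by
    ext x
    rw [LinearMap.mem_ker, Matrix.mulVecLin_apply, hkerM x, Submodule.mem_span_singleton]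
    constructor
    · rintro ⟨t, rfl⟩; exact ⟨t, rfl⟩
    · rintro ⟨t, rfl⟩; exact ⟨t, rfl⟩
  have hrn := M.mulVecLin.finrank_range_add_finrank_ker
  rw [hkerlin, finrank_span_singleton hr] at hrn
  have : M.rank + 1 = N := by
    rw [Matrix.rank]
    simpa using hrn
  omega
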